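/- Consider the bilinear form B(x,y) = xᵀG'y on ℤ⁵, where G' = [[0,0,0,1,6],[0,0,1,6,22],[0,1,0,6,22],[1,6,6,44,126],[6,22,22,126,308]], with standard basis vectors e₁,…,e₅. A vector x ∈ ℤ⁵ satisfies B(x,e₁) = B(x,e₂) = B(x,e₃) = B(x,e₄) = 0 and has coprime coordinates (gcd of the five coordinates equal to 1) if and only if x = (−30,14,14,−6,1) or x = (30,−14,−14,6,−1). Moreover, for u = (−30,14,14,−6,1) one has B(u,u) = −12. -/

import Mathlib

open Matrix

/-- The Gram matrix of `H⁸_alg(M,ℤ)` in the basis `(Π₁L, Π₁ξ, Π₂ξ, L²ξ², Lξ³)`. -/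
def gramD4 : Matrix (Fin 5) (Fin 5) ℤ :=
  !![0, 0, 0, 1, 6;
     0, 0, 1, 6, 22;
     0, 1, 0, 6, 22;
     1, 6, 6, 44, 126;
     6, 22, 22, 126, 308]

/-- The bilinear form `B(x,y) = xᵀ G' y` on `ℤ⁵` given by the Gram matrix. -/
def bD4 (x y : Fin 5 → ℤ) : ℤ := x ⬝ᵥ gramD4.mulVec y

/-- A vector `x ∈ ℤ⁵` orthogonal to `e₁, e₂, e₃, e₄` with coprime coordinates is
exactly `±(-30,14,14,-6,1)`; moreover `u = (-30,14,14,-6,1)` satisfies `B(u,u) = -12`. -/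
theorem pushforward_polarization_D4 :
    (∀ x : Fin 5 → ℤ,
      (bD4 x ![1, 0, 0, 0, 0] = 0 ∧ bD4 x ![0, 1, 0, 0, 0] = 0 ∧
        bD4 x ![0, 0, 1, 0, 0] = 0 ∧ bD4 x ![0, 0, 0, 1, 0] = 0 ∧
        Int.gcd (x 0) (Int.gcd (x 1) (Int.gcd (x 2) (Int.gcd (x 3) (x 4)))) = 1) ↔
        (x = ![-30, 14, 14, -6, 1] ∨ x = ![30, -14, -14, 6, -1])) ∧
    bD4 ![-30, 14, 14, -6, 1] ![-30, 14, 14, -6, 1] = -12 := by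
  constructor
  · intro x
    constructor
    · rintro ⟨h1, h2, h3, h4, hg⟩
      simp only [bD4, gramD4, dotProduct, mulVec, Fin.sum_univ_five, Matrix.cons_val_zero,
        Matrix.cons_val_one, Matrix.cons_val_two, Matrix.cons_val_three, Matrix.cons_val_four,
        Matrix.head_cons, Matrix.tail_cons, Matrix.of_apply, Matrix.cons_val',
        Matrix.empty_val', Matrix.cons_val_fin_one, Matrix.head_fin_const, mul_zero, mul_one,
        zero_mul, one_mul, add_zero, zero_add] at h1 h2 h3 h4
      -- derive linear relations
      have e3 : x 3 = -6 * x 4 := by omega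
      have e2 : x 2 = 14 * x 4 := by omega
      have e1 : x 1 = 14 * x 4 := by omega
      have e0 : x 0 = -30 * x 4 := by omega
      -- coprimality forces x 4 = ±1
      have hdvd : x 4 ∣ (Int.gcd (x 0) (Int.gcd (x 1) (Int.gcd (x 2)
          (Int.gcd (x 3) (x 4)))) : ℤ) := by
        refine Int.dvd_coe_gcd ⟨-30, by linarith⟩ ?_
        refine Int.dvd_coe_gcd ⟨14, by linarith⟩ ?_
        refine Int.dvd_coe_gcd ⟨14, by linarith⟩ ?_
        exact Int.dvd_coe_gcd ⟨-6, by linarith⟩ dvd_rfl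
      rw [hg] at hdvd
      have hu : x 4 = 1 ∨ x 4 = -1 :=
        Int.isUnit_iff.mp (isUnit_of_dvd_one (by exact_mod_cast hdvd))
      rcases hu with h | h
      · left
        funext i
        fin_cases i <;> simp [e0, e1, e2, e3, h]
      · right
        funext i
        fin_cases i <;> simp [e0, e1, e2, e3, h]
    · rintro (rfl | rfl) <;>
        refine ⟨?_, ?_, ?_, ?_, ?_⟩ <;>
        first
        | simp [bD4, gramD4, dotProduct, mulVec, Fin.sum_univ_five, Matrix.cons_val_zero,
            Matrix.cons_val_one, Matrix.cons_val_two, Matrix.cons_val_three, Matrix.cons_val_four,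
            Matrix.head_cons, Matrix.tail_cons, Matrix.of_apply, Matrix.cons_val',
            Matrix.empty_val', Matrix.cons_val_fin_one, Matrix.head_fin_const]
        | decide
  · simp [bD4, gramD4, dotProduct, mulVec, Fin.sum_univ_five, Matrix.cons_val_zero,
      Matrix.cons_val_one, Matrix.cons_val_two, Matrix.cons_val_three, Matrix.cons_val_four,
      Matrix.head_cons, Matrix.tail_cons, Matrix.of_apply, Matrix.cons_val',
      Matrix.empty_val', Matrix.cons_val_fin_one, Matrix.head_fin_const]
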